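/- Let 0 < t < w(X)/2, so that B₋ₜ(X) ≠ ∅. If S ⊆ ℂ is a set such that S + L is a t-covering of B₋ₜ(X) + L, then S + L is a (ν₂(θ)·t)-covering of all of ℂ. -/

import Mathlib

open MeasureTheory Set Filter

noncomputable section

/-- The lattice `L = ℤη₁ + ℤη₂`. -/
def lat (η₁ η₂ : ℂ) : Set ℂ := {d : ℂ | ∃ m n : ℤ, d = (m : ℂ) * η₁ + (n : ℂ) * η₂}

/-- The fundamental domain `X = {ξ + xη₁ + yη₂ : x, y ∈ [0,1)}`. -/
def fund (ξ η₁ η₂ : ℂ) : Set ℂ :=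
  {z : ℂ | ∃ x y : ℝ, x ∈ Set.Ico (0:ℝ) 1 ∧ y ∈ Set.Ico (0:ℝ) 1 ∧
    z = ξ + (x : ℂ) * η₁ + (y : ℂ) * η₂}

/-- Covering radius of the lattice: infimum of `R > 0` such that every point of `ℂ`
is within distance `R` of a lattice point. -/
def covRad (η₁ η₂ : ℂ) : ℝ :=
  sInf {R : ℝ | 0 < R ∧ ∀ z : ℂ, ∃ d ∈ lat η₁ η₂, dist z d ≤ R}

/-- The constant ν₁(θ). -/
def nu1 (θ : ℝ) : ℝ :=
  if 1 / 2 < Real.tan (θ / 2) ∧ Real.tan (θ / 2) < 2 then 2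
  else (1 + |Real.cos θ|) / (2 * (Real.sin θ + |Real.cos θ| - 1))

/-- The constant ν₂(θ). -/
def nu2 (θ : ℝ) : ℝ :=
  1 + Real.sqrt 2 / (Real.sin θ * Real.sqrt (1 + |Real.cos θ|))

/-- The width `w(X) = min{|η₁|, |η₂|}·sin θ`. -/
def width (θ : ℝ) (η₁ η₂ : ℂ) : ℝ :=
  min (‖η₁‖) (‖η₂‖) * Real.sin θ

/-- An ACIM of `T` on `X`: a Borel probability measure concentrated on `X`,
`T`-invariant, and absolutely continuous w.r.t. 2-dimensional Lebesgue measure. -/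
def IsACIM (X : Set ℂ) (T : ℂ → ℂ) (μ : Measure ℂ) : Prop :=
  IsProbabilityMeasure μ ∧ μ Xᶜ = 0 ∧
    (∀ A : Set ℂ, MeasurableSet A → μ (T ⁻¹' A) = μ A) ∧ μ ≪ volume

/-- `S` is a finite union of (line) segments. -/
def IsFUS (S : Set ℂ) : Prop :=
  ∃ F : Finset (ℂ × ℂ), S = ⋃ p ∈ F, segment ℝ p.1 p.2

/-- A Pisot number: a real algebraic integer `β > 1` all of whose other conjugates
have absolute value strictly less than 1. -/
def IsPisot (β : ℝ) : Prop :=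
  1 < β ∧ IsIntegral ℤ β ∧
    ∀ z : ℂ, Polynomial.aeval z (minpoly ℤ β) = 0 → z ≠ (β : ℂ) → ‖z‖ < 1

/-- `B₋ₜ(A)`: the points of `A` at distance at least `t` from the boundary of `A`. -/
def innerPart (t : ℝ) (A : Set ℂ) : Set ℂ := {x ∈ A | t ≤ Metric.infDist x (frontier A)}

/-- `S` is a `t`-covering of `A`: every point of `A` is within distance `t` of `S`. -/
def IsCovering (t : ℝ) (S A : Set ℂ) : Prop := ∀ x ∈ A, ∃ s ∈ S, dist x s ≤ t

/-- `Y = X ∖ ⋃_{n ∈ ℤ} Tⁿ(∂X)`: removal of all forward images and preimages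
of the boundary. -/
def Yset (X : Set ℂ) (T : ℂ → ℂ) : Set ℂ :=
  X \ ((⋃ n : ℕ, T^[n] '' frontier X) ∪ (⋃ n : ℕ, {z ∈ X | T^[n] z ∈ frontier X}))


private lemma keyA (t c α β : ℝ) (hc0 : 0 ≤ c) (hc1 : c ≤ 1) (hβ0 : 0 ≤ β) (hβα : β ≤ α)
    (hαt : α ≤ t) (hr : c * (t - α) ≤ β) :
    (1+c) * ((t-α)^2 + (t-β)^2 + 2*(t-α)*(t-β)*c) ≤ 2*t^2 := by
  nlinarith [mul_nonneg (by nlinarith : (0:ℝ) ≤ 2*t - ((1+c)*(2*t-α-β) + (1-c)*(α-β)))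
      (by nlinarith : (0:ℝ) ≤ 2*t + ((1+c)*(2*t-α-β) + (1-c)*(α-β))),
    mul_nonneg (mul_nonneg (by linarith : (0:ℝ) ≤ 1-c) (by linarith : (0:ℝ) ≤ α-β))
      (by nlinarith : (0:ℝ) ≤ (1+c)*(2*(2*t-α-β)-(α-β)) + (1-c)*(α-β))]

private lemma keyB (t c α β : ℝ) (hc0 : 0 ≤ c) (hc1 : c ≤ 1) (hβ0 : 0 ≤ β) (hβα : β ≤ α)
    (hαt : α ≤ t) (hr : β ≤ c * (t - α)) :
    (1+c) * ((t-α)^2 + (t+β)^2 - 2*(t-α)*(t+β)*c) ≤ 2*t^2 := by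
  nlinarith [mul_nonneg (by nlinarith : (0:ℝ) ≤ 2*t - (1-c)*(2*t-α+β) - (1+c)*(α+β))
      (by nlinarith : (0:ℝ) ≤ 2*t - (1-c)*(2*t-α+β) + (1+c)*(α+β)),
    mul_nonneg (mul_nonneg (by linarith : (0:ℝ) ≤ 1-c) (by linarith : (0:ℝ) ≤ 2*t-α+β))
      (by nlinarith : (0:ℝ) ≤ 2*t - (2*t-α+β))]

private lemma keyC (t c α β : ℝ) (hc0 : 0 ≤ c) (hc1 : c ≤ 1) (hα0 : 0 ≤ α) (hαt : α ≤ t)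
    (hβ0 : β ≤ 0) (hβt : -t ≤ β) :
    (1+c) * ((t-α)^2 + (-t-β)^2 + 2*(t-α)*(-t-β)*c) ≤ 2*t^2 := by
  nlinarith [mul_nonneg (mul_nonneg hc0 (by linarith : (0:ℝ) ≤ t-α)) (by linarith : (0:ℝ) ≤ t+β),
    sq_nonneg ((t-α)-(t+β)), mul_nonneg (by linarith : (0:ℝ) ≤ t-α) (by linarith : (0:ℝ) ≤ t+β),
    mul_nonneg hc0 (mul_nonneg (by linarith : (0:ℝ) ≤ t-α) (by linarith : (0:ℝ) ≤ t+β)),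
    sq_nonneg c, mul_nonneg hα0 (by linarith : (0:ℝ) ≤ t+β)]

private lemma keyPP (t c α β : ℝ) (hc0 : 0 ≤ c) (hc1 : c ≤ 1) (hβ0 : 0 ≤ β) (hβα : β ≤ α)
    (hαt : α ≤ t) :
    ∃ σ₁ σ₂ : ℝ, (σ₁ = 1 ∨ σ₁ = -1) ∧ (σ₂ = 1 ∨ σ₂ = -1) ∧
      (1+c) * ((σ₁*t-α)^2 + (σ₂*t-β)^2 + 2*(σ₁*t-α)*(σ₂*t-β)*c) ≤ 2*t^2 := by
  rcases le_total (c * (t - α)) β with hr | hr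
  · exact ⟨1, 1, Or.inl rfl, Or.inl rfl, by
      have := keyA t c α β hc0 hc1 hβ0 hβα hαt hr; nlinarith [this]⟩
  · exact ⟨1, -1, Or.inl rfl, Or.inr rfl, by
      have := keyB t c α β hc0 hc1 hβ0 hβα hαt hr; nlinarith [this]⟩

private lemma keyPos (t c α β : ℝ) (hc0 : 0 ≤ c) (hc1 : c ≤ 1)
    (hα : |α| ≤ t) (hβ : |β| ≤ t) :
    ∃ σ₁ σ₂ : ℝ, (σ₁ = 1 ∨ σ₁ = -1) ∧ (σ₂ = 1 ∨ σ₂ = -1) ∧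
      (1+c) * ((σ₁*t-α)^2 + (σ₂*t-β)^2 + 2*(σ₁*t-α)*(σ₂*t-β)*c) ≤ 2*t^2 := by
  rw [abs_le] at hα hβ
  rcases le_total 0 α with hα0 | hα0 <;> rcases le_total 0 β with hβ0 | hβ0
  · rcases le_total β α with hle | hle
    · exact keyPP t c α β hc0 hc1 hβ0 hle hα.2
    · obtain ⟨σ₁, σ₂, h1, h2, h⟩ := keyPP t c β α hc0 hc1 hα0 hle hβ.2
      exact ⟨σ₂, σ₁, h2, h1, by nlinarith [h]⟩
  · exact ⟨1, -1, Or.inl rfl, Or.inr rfl, by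
      have := keyC t c α β hc0 hc1 hα0 hα.2 hβ0 hβ.1; nlinarith [this]⟩
  · exact ⟨-1, 1, Or.inr rfl, Or.inl rfl, by
      have := keyC t c β α hc0 hc1 hβ0 hβ.2 hα0 hα.1; nlinarith [this]⟩
  · rcases le_total (-β) (-α) with hle | hle
    · obtain ⟨σ₁, σ₂, h1, h2, h⟩ := keyPP t c (-α) (-β) hc0 hc1 (by linarith) hle (by linarith)
      exact ⟨-σ₁, -σ₂, by rcases h1 with h'|h' <;> simp [h'], by rcases h2 with h'|h' <;> simp [h'],
        by nlinarith [h]⟩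
    · obtain ⟨σ₁, σ₂, h1, h2, h⟩ := keyPP t c (-β) (-α) hc0 hc1 (by linarith) hle (by linarith)
      exact ⟨-σ₂, -σ₁, by rcases h2 with h'|h' <;> simp [h'], by rcases h1 with h'|h' <;> simp [h'],
        by nlinarith [h]⟩

private lemma keyMaster (t c α β : ℝ) (hc1 : |c| ≤ 1) (hα : |α| ≤ t) (hβ : |β| ≤ t) :
    ∃ σ₁ σ₂ : ℝ, (σ₁ = 1 ∨ σ₁ = -1) ∧ (σ₂ = 1 ∨ σ₂ = -1) ∧
      (1+|c|) * ((σ₁*t-α)^2 + (σ₂*t-β)^2 + 2*(σ₁*t-α)*(σ₂*t-β)*c) ≤ 2*t^2 := by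
  rcases le_total 0 c with hc0 | hc0
  · rw [abs_of_nonneg hc0]
    exact keyPos t c α β hc0 (by rwa [abs_of_nonneg hc0] at hc1) hα hβ
  · rw [abs_of_nonpos hc0]
    obtain ⟨σ₁, σ₂, h1, h2, h⟩ := keyPos t (-c) α (-β) (by linarith)
      (by rwa [abs_of_nonpos hc0] at hc1) hα (by rwa [abs_neg])
    exact ⟨σ₁, -σ₂, h1, by rcases h2 with h'|h' <;> simp [h'], by nlinarith [h]⟩

private def Kdet (η₁ η₂ : ℂ) : ℝ := η₁.im*η₂.re - η₁.re*η₂.im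

private def co1 (ξ η₁ η₂ z : ℂ) : ℝ := ((z-ξ).im*η₂.re - (z-ξ).re*η₂.im)/Kdet η₁ η₂
private def co2 (ξ η₁ η₂ z : ℂ) : ℝ := ((z-ξ).re*η₁.im - (z-ξ).im*η₁.re)/Kdet η₁ η₂

private lemma co_repr (ξ η₁ η₂ z : ℂ) (hK : Kdet η₁ η₂ ≠ 0) :
    z = ξ + (co1 ξ η₁ η₂ z : ℂ) * η₁ + (co2 ξ η₁ η₂ z : ℂ) * η₂ := by
  unfold co1 co2 Kdet at *
  have hK' : η₂.re * η₁.im - η₂.im * η₁.re ≠ 0 := by intro h; apply hK; linarith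
  apply Complex.ext <;>
    simp only [Complex.add_re, Complex.add_im, Complex.mul_re, Complex.mul_im,
      Complex.ofReal_re, Complex.ofReal_im, Complex.sub_re, Complex.sub_im] <;>
    field_simp <;> ring

private lemma co1_val (ξ η₁ η₂ : ℂ) (hK : Kdet η₁ η₂ ≠ 0) (x y : ℝ) :
    co1 ξ η₁ η₂ (ξ + (x:ℂ)*η₁ + (y:ℂ)*η₂) = x := by
  unfold co1 Kdet at *
  simp only [Complex.add_re, Complex.add_im, Complex.mul_re, Complex.mul_im,
    Complex.ofReal_re, Complex.ofReal_im, Complex.sub_re, Complex.sub_im]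
  field_simp; ring

private lemma co2_val (ξ η₁ η₂ : ℂ) (hK : Kdet η₁ η₂ ≠ 0) (x y : ℝ) :
    co2 ξ η₁ η₂ (ξ + (x:ℂ)*η₁ + (y:ℂ)*η₂) = y := by
  unfold co2 Kdet at *
  simp only [Complex.add_re, Complex.add_im, Complex.mul_re, Complex.mul_im,
    Complex.ofReal_re, Complex.ofReal_im, Complex.sub_re, Complex.sub_im]
  field_simp; ring

private lemma co1_cont (ξ η₁ η₂ : ℂ) : Continuous (co1 ξ η₁ η₂) := by
  unfold co1; fun_prop

private lemma co2_cont (ξ η₁ η₂ : ℂ) : Continuous (co2 ξ η₁ η₂) := by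
  unfold co2; fun_prop

private lemma abs_sq_eq (η₁ η₂ : ℂ) (u v : ℝ) :
    ‖(u:ℂ)*η₁ + (v:ℂ)*η₂‖^2
      = u^2*‖η₁‖^2 + 2*u*v*((η₁ * (starRingEnd ℂ) η₂).re)
        + v^2*‖η₂‖^2 := by
  rw [Complex.sq_norm, Complex.sq_norm, Complex.sq_norm]
  simp only [Complex.normSq_apply, Complex.add_re, Complex.add_im, Complex.mul_re,
    Complex.mul_im, Complex.ofReal_re, Complex.ofReal_im, Complex.conj_re, Complex.conj_im]
  ring

private lemma lagrange (η₁ η₂ : ℂ) :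
    ‖η₁‖^2 * ‖η₂‖^2
      = ((η₁ * (starRingEnd ℂ) η₂).re)^2 + (Kdet η₁ η₂)^2 := by
  rw [Complex.sq_norm, Complex.sq_norm]
  simp only [Complex.normSq_apply, Complex.mul_re, Complex.conj_re, Complex.conj_im, Kdet]
  ring

private lemma Kdet_ne (η₁ η₂ : ℂ) (hη : (η₁ / η₂).im ≠ 0) : Kdet η₁ η₂ ≠ 0 := by
  intro h
  apply hη
  rw [Complex.div_im]
  unfold Kdet at h
  rw [show η₁.im * η₂.re / Complex.normSq η₂ - η₁.re * η₂.im / Complex.normSq η₂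
    = (η₁.im * η₂.re - η₁.re * η₂.im) / Complex.normSq η₂ by ring, h, zero_div]

private lemma onedim (eh : ℝ) (n : ℤ) (δ : ℝ) (hδ0 : 0 < δ) (hδ : δ ≤ 1/2)
    (h1 : δ ≤ |eh|) (h2 : |eh| ≤ 1/2) :
    ∃ (m : ℤ) (x' : ℝ), δ ≤ x' ∧ x' ≤ 1 - δ ∧ (m : ℝ) + x' = (n : ℝ) + eh := by
  rcases le_or_gt 0 eh with h | h
  · exact ⟨n, eh, by rwa [abs_of_nonneg h] at h1, by rw [abs_of_nonneg h] at h2; linarith, by ring⟩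
  · exact ⟨n-1, 1+eh, by rw [abs_of_neg h] at h2; linarith,
      by rw [abs_of_neg h] at h1; linarith, by push_cast; ring⟩

set_option maxHeartbeats 1000000 in
private lemma mem_inner (ξ η₁ η₂ : ℂ) (hK : Kdet η₁ η₂ ≠ 0) (t x' y' : ℝ) (ht : 0 < t)
    (hx1 : t * ‖η₂‖ / |Kdet η₁ η₂| ≤ x')
    (hx2 : x' ≤ 1 - t * ‖η₂‖ / |Kdet η₁ η₂|)
    (hy1 : t * ‖η₁‖ / |Kdet η₁ η₂| ≤ y')
    (hy2 : y' ≤ 1 - t * ‖η₁‖ / |Kdet η₁ η₂|) :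
    (ξ + (x':ℂ)*η₁ + (y':ℂ)*η₂) ∈ innerPart t (fund ξ η₁ η₂) := by
  have hκ : 0 < |Kdet η₁ η₂| := abs_pos.mpr hK
  have hP : 0 < ‖η₁‖ := by
    rcases eq_or_ne η₁ 0 with h | h
    · exfalso; apply hK; simp [Kdet, h]
    · exact norm_pos_iff.mpr h
  have hQ : 0 < ‖η₂‖ := by
    rcases eq_or_ne η₂ 0 with h | h
    · exfalso; apply hK; simp [Kdet, h]
    · exact norm_pos_iff.mpr h
  have hfund_eq : fund ξ η₁ η₂
      = {z | co1 ξ η₁ η₂ z ∈ Ico (0:ℝ) 1 ∧ co2 ξ η₁ η₂ z ∈ Ico (0:ℝ) 1} := by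
    ext z
    constructor
    · rintro ⟨x, y, hx, hy, rfl⟩
      show co1 ξ η₁ η₂ _ ∈ Ico (0:ℝ) 1 ∧ co2 ξ η₁ η₂ _ ∈ Ico (0:ℝ) 1
      rw [co1_val ξ η₁ η₂ hK, co2_val ξ η₁ η₂ hK]
      exact ⟨hx, hy⟩
    · rintro ⟨h1, h2⟩
      exact ⟨_, _, h1, h2, co_repr ξ η₁ η₂ z hK⟩
  set P := ‖η₁‖ with hPdef
  set Q := ‖η₂‖ with hQdef
  set κ := |Kdet η₁ η₂| with hκdef
  set δ₁ := t * Q / κ with hδ₁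
  set δ₂ := t * P / κ with hδ₂
  have hδ₁0 : 0 < δ₁ := by positivity
  have hδ₂0 : 0 < δ₂ := by positivity
  set w₀ := ξ + (x':ℂ)*η₁ + (y':ℂ)*η₂ with hw₀
  have hwf : w₀ ∈ fund ξ η₁ η₂ :=
    ⟨x', y', ⟨by linarith, by linarith⟩, ⟨by linarith, by linarith⟩, rfl⟩
  set O : Set ℂ := (co1 ξ η₁ η₂) ⁻¹' (Ioo 0 1) ∩ (co2 ξ η₁ η₂) ⁻¹' (Ioo 0 1) with hO
  have hOopen : IsOpen O :=
    ((isOpen_Ioo).preimage (co1_cont ξ η₁ η₂)).inter ((isOpen_Ioo).preimage (co2_cont ξ η₁ η₂))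
  have hOsub : O ⊆ fund ξ η₁ η₂ := by
    rw [hfund_eq]
    rintro z ⟨h1, h2⟩
    exact ⟨Ioo_subset_Ico_self h1, Ioo_subset_Ico_self h2⟩
  have hOint : O ⊆ interior (fund ξ η₁ η₂) := interior_maximal hOsub hOopen
  have hfne : (frontier (fund ξ η₁ η₂)).Nonempty := by
    rcases eq_empty_or_nonempty (frontier (fund ξ η₁ η₂)) with h | h
    · exfalso
      have hclopen := isClopen_iff_frontier_eq_empty.mpr h
      rcases isClopen_iff.mp hclopen with h' | h'
      · have : ξ ∈ fund ξ η₁ η₂ := ⟨0, 0, ⟨le_refl _, one_pos⟩, ⟨le_refl _, one_pos⟩, by simp⟩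
        rw [h'] at this; exact this
      · have : (ξ + ((2:ℝ):ℂ)*η₁ + ((0:ℝ):ℂ)*η₂) ∈ fund ξ η₁ η₂ := h' ▸ mem_univ _
        rw [hfund_eq] at this
        have := this.1
        rw [co1_val ξ η₁ η₂ hK] at this
        exact absurd this.2 (by norm_num)
    · exact h
  refine ⟨hwf, ?_⟩
  by_contra hlt
  push_neg at hlt
  obtain ⟨q, hqf, hqd⟩ := (Metric.infDist_lt_iff hfne).mp hlt
  apply hqf.2
  apply hOint
  set u := co1 ξ η₁ η₂ q - x' with hu
  set v := co2 ξ η₁ η₂ q - y' with hv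
  have hq_repr : q - w₀ = (u:ℂ)*η₁ + (v:ℂ)*η₂ := by
    have h1 := co_repr ξ η₁ η₂ q hK
    rw [hu, hv, hw₀]
    push_cast
    linear_combination h1
  have habs : ‖(u:ℂ)*η₁ + (v:ℂ)*η₂‖^2 < t^2 := by
    rw [← hq_repr]
    have : ‖q - w₀‖ < t := by
      rw [← Complex.dist_eq, dist_comm]; exact hqd
    nlinarith [norm_nonneg (q - w₀)]
  rw [abs_sq_eq] at habs
  rw [← hPdef, ← hQdef] at habs
  set R := (η₁ * (starRingEnd ℂ) η₂).re with hR
  have hlag : P^2 * Q^2 = R^2 + κ^2 := by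
    rw [hκdef, sq_abs]; exact lagrange η₁ η₂
  have hκ2 : κ^2 = P^2*Q^2 - R^2 := by linarith
  have hu_bound : |u| < δ₁ := by
    have h1 : u^2 * κ^2 < t^2 * Q^2 := by
      rw [hκ2]
      nlinarith [sq_nonneg (u*R + v*Q^2), mul_lt_mul_of_pos_right habs (by positivity : (0:ℝ) < Q^2)]
    have h2 : |u| * κ < t * Q := by
      by_contra hcon
      push_neg at hcon
      nlinarith [sq_abs u, mul_le_mul hcon hcon (by positivity) (by positivity)]
    rw [hδ₁, lt_div_iff₀ hκ]; linarith
  have hv_bound : |v| < δ₂ := by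
    have h1 : v^2 * κ^2 < t^2 * P^2 := by
      rw [hκ2]
      nlinarith [sq_nonneg (v*R + u*P^2), mul_lt_mul_of_pos_right habs (by positivity : (0:ℝ) < P^2)]
    have h2 : |v| * κ < t * P := by
      by_contra hcon
      push_neg at hcon
      nlinarith [sq_abs v, mul_le_mul hcon hcon (by positivity) (by positivity)]
    rw [hδ₂, lt_div_iff₀ hκ]; linarith
  rw [abs_lt] at hu_bound hv_bound
  have e1 : co1 ξ η₁ η₂ q = x' + u := by rw [hu]; ring
  have e2 : co2 ξ η₁ η₂ q = y' + v := by rw [hv]; ring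
  exact ⟨⟨by rw [e1]; linarith [hu_bound.1], by rw [e1]; linarith [hu_bound.2]⟩,
    ⟨by rw [e2]; linarith [hv_bound.1], by rw [e2]; linarith [hv_bound.2]⟩⟩

private lemma le_of_sq_le_sq' (x ρ : ℝ) (hx : 0 ≤ x) (hρ : 0 ≤ ρ) (h : x^2 ≤ ρ^2) : x ≤ ρ := by
  nlinarith

private lemma aux_ts (rs G q t : ℝ) (h1 : rs*G = q*t) (h2 : G ≤ q) (hq : 0 < q) (h3 : 0 ≤ rs) :
    t ≤ rs := by nlinarith

set_option maxHeartbeats 2000000 in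
/-- If 0 < t < w(X)/2 and S + L is a t-covering of B₋ₜ(X) + L, then
S + L is a (ν₂(θ)·t)-covering of all of ℂ. -/
theorem statement9
    (ξ η₁ η₂ : ℂ) (hη : (η₁ / η₂).im ≠ 0)
    (θ : ℝ) (hθ : θ ∈ Set.Ioo 0 Real.pi)
    (hcos : Real.cos θ = (η₁ * (starRingEnd ℂ) η₂).re / (‖η₁‖ * ‖η₂‖))
    (t : ℝ) (ht : 0 < t) (ht2 : t < width θ η₁ η₂ / 2)
    (S : Set ℂ)
    (hS : IsCovering t (Set.image2 (· + ·) S (lat η₁ η₂))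
      (Set.image2 (· + ·) (innerPart t (fund ξ η₁ η₂)) (lat η₁ η₂))) :
    IsCovering (nu2 θ * t) (Set.image2 (· + ·) S (lat η₁ η₂)) Set.univ := by
  intro z _
  have hK : Kdet η₁ η₂ ≠ 0 := Kdet_ne η₁ η₂ hη
  have hκ : 0 < |Kdet η₁ η₂| := abs_pos.mpr hK
  have hP : 0 < ‖η₁‖ := by
    rcases eq_or_ne η₁ 0 with h | h
    · exfalso; apply hK; simp [Kdet, h]
    · exact norm_pos_iff.mpr h
  have hQ : 0 < ‖η₂‖ := by
    rcases eq_or_ne η₂ 0 with h | h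
    · exfalso; apply hK; simp [Kdet, h]
    · exact norm_pos_iff.mpr h
  unfold width at ht2
  set P := ‖η₁‖ with hPdef
  set Q := ‖η₂‖ with hQdef
  set κ := |Kdet η₁ η₂| with hκdef
  set s := Real.sin θ with hsdef
  set cθ := Real.cos θ with hcdef
  have hs : 0 < s := Real.sin_pos_of_pos_of_lt_pi hθ.1 hθ.2
  set R := (η₁ * (starRingEnd ℂ) η₂).re with hRdef
  have hRc : R = cθ * (P*Q) := by
    rw [hcos]; field_simp
  have hlag : P^2*Q^2 = R^2 + (Kdet η₁ η₂)^2 := lagrange η₁ η₂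
  have hsc : s^2 + cθ^2 = 1 := Real.sin_sq_add_cos_sq θ
  have hc1 : |cθ| ≤ 1 := Real.abs_cos_le_one θ
  have hκs : s * (P*Q) = κ := by
    have h1 : (s*(P*Q))^2 = κ^2 := by
      rw [hκdef, sq_abs]
      linear_combination (P*Q)^2 * hsc + hlag + (R + cθ*(P*Q)) * hRc
    calc s*(P*Q) = Real.sqrt ((s*(P*Q))^2) := (Real.sqrt_sq (by positivity)).symm
      _ = Real.sqrt (κ^2) := by rw [h1]
      _ = κ := Real.sqrt_sq hκ.le
  set δ₁ := t*Q/κ with hδ₁def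
  set δ₂ := t*P/κ with hδ₂def
  have hδ₁0 : 0 < δ₁ := by positivity
  have hδ₂0 : 0 < δ₂ := by positivity
  have hδ₁Ps : δ₁ * (P*s) = t := by
    rw [hδ₁def, ← hκs]; field_simp
  have hδ₂Qs : δ₂ * (Q*s) = t := by
    rw [hδ₂def, ← hκs]; field_simp
  have hδ₁half : δ₁ ≤ 1/2 := by
    have h1 : t < P*s/2 := lt_of_lt_of_le ht2 (by
      have := mul_le_mul_of_nonneg_right (min_le_left P Q) hs.le
      linarith)
    have h2 : δ₁ * (P*s) < (1/2) * (P*s) := by rw [hδ₁Ps]; linarith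
    exact le_of_lt (lt_of_mul_lt_mul_right h2 (by positivity))
  have hδ₂half : δ₂ ≤ 1/2 := by
    have h1 : t < Q*s/2 := lt_of_lt_of_le ht2 (by
      have := mul_le_mul_of_nonneg_right (min_le_right P Q) hs.le
      linarith)
    have h2 : δ₂ * (Q*s) < (1/2) * (Q*s) := by rw [hδ₂Qs]; linarith
    exact le_of_lt (lt_of_mul_lt_mul_right h2 (by positivity))
  set r := (nu2 θ - 1) * t with hrdef
  have hnu : nu2 θ - 1 = Real.sqrt 2 / (s * Real.sqrt (1 + |cθ|)) := by
    unfold nu2; rw [← hsdef, ← hcdef]; ring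
  have hg0 : 0 < Real.sqrt (1+|cθ|) := Real.sqrt_pos.mpr (by positivity)
  have hr0 : 0 ≤ r := by
    rw [hrdef, hnu]; positivity
  have hr2 : r^2 * (s^2 * (1+|cθ|)) = 2*t^2 := by
    rw [hrdef, hnu, mul_pow, div_pow, mul_pow,
      Real.sq_sqrt (by norm_num : (0:ℝ) ≤ 2),
      Real.sq_sqrt (by positivity : (0:ℝ) ≤ 1+|cθ|)]
    field_simp
    try ring
  have hts : t ≤ r * s := by
    have h1 : r * (s * Real.sqrt (1+|cθ|)) = Real.sqrt 2 * t := by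
      rw [hrdef, hnu]; field_simp; try ring
    have h2 : Real.sqrt (1+|cθ|) ≤ Real.sqrt 2 := Real.sqrt_le_sqrt (by linarith)
    exact aux_ts (r*s) (Real.sqrt (1+|cθ|)) (Real.sqrt 2) t (by rw [mul_assoc]; exact h1) h2
      (Real.sqrt_pos.mpr (by norm_num)) (mul_nonneg hr0 hs.le)
  set pp := co1 ξ η₁ η₂ z with hpp
  set qq := co2 ξ η₁ η₂ z with hqq
  set n₁ := round pp with hn₁
  set n₂ := round qq with hn₂
  set e₁ := pp - n₁ with he₁def
  set e₂ := qq - n₂ with he₂def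
  have he₁ : |e₁| ≤ 1/2 := abs_sub_round pp
  have he₂ : |e₂| ≤ 1/2 := abs_sub_round qq
  obtain ⟨eh₁, eh₂, hehl1, hehu1, hehl2, hehu2, hΔ⟩ :
      ∃ eh₁ eh₂ : ℝ, δ₁ ≤ |eh₁| ∧ |eh₁| ≤ 1/2 ∧ δ₂ ≤ |eh₂| ∧ |eh₂| ≤ 1/2 ∧
        ‖((e₁ - eh₁ : ℝ):ℂ)*η₁ + ((e₂ - eh₂ : ℝ):ℂ)*η₂‖ ≤ r := by
    have habs2 : ∀ u v : ℝ, ‖(u:ℂ)*η₁ + (v:ℂ)*η₂‖^2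
        = u^2*P^2 + 2*u*v*R + v^2*Q^2 := fun u v => abs_sq_eq η₁ η₂ u v
    rcases lt_or_ge |e₁| δ₁ with hb1 | hg1 <;> rcases lt_or_ge |e₂| δ₂ with hb2 | hg2
    · -- both bad: use the key lemma
      set α := e₁ * (P*s) with hαdef
      set β := e₂ * (Q*s) with hβdef
      have hα : |α| ≤ t := by
        rw [hαdef, abs_mul, abs_of_pos (by positivity : (0:ℝ) < P*s)]
        calc |e₁| * (P*s) ≤ δ₁ * (P*s) :=
              mul_le_mul_of_nonneg_right hb1.le (by positivity)
          _ = t := hδ₁Ps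
      have hβ : |β| ≤ t := by
        rw [hβdef, abs_mul, abs_of_pos (by positivity : (0:ℝ) < Q*s)]
        calc |e₂| * (Q*s) ≤ δ₂ * (Q*s) :=
              mul_le_mul_of_nonneg_right hb2.le (by positivity)
          _ = t := hδ₂Qs
      obtain ⟨σ₁, σ₂, hσ₁, hσ₂, hkey⟩ := keyMaster t cθ α β hc1 hα hβ
      have hσ₁a : |σ₁| = 1 := by rcases hσ₁ with h|h <;> rw [h] <;> norm_num
      have hσ₂a : |σ₂| = 1 := by rcases hσ₂ with h|h <;> rw [h] <;> norm_num
      refine ⟨σ₁*δ₁, σ₂*δ₂, ?_, ?_, ?_, ?_, ?_⟩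
      · rw [abs_mul, hσ₁a, one_mul, abs_of_pos hδ₁0]
      · rw [abs_mul, hσ₁a, one_mul, abs_of_pos hδ₁0]; exact hδ₁half
      · rw [abs_mul, hσ₂a, one_mul, abs_of_pos hδ₂0]
      · rw [abs_mul, hσ₂a, one_mul, abs_of_pos hδ₂0]; exact hδ₂half
      · set u := e₁ - σ₁*δ₁ with hudef
        set v := e₂ - σ₂*δ₂ with hvdef
        have hU : u * (P*s) = α - σ₁*t := by
          rw [hudef, hαdef]; linear_combination (-σ₁) * hδ₁Ps
        have hV : v * (Q*s) = β - σ₂*t := by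
          rw [hvdef, hβdef]; linear_combination (-σ₂) * hδ₂Qs
        have hid : ‖(u:ℂ)*η₁ + (v:ℂ)*η₂‖^2 * s^2
            = (σ₁*t-α)^2 + (σ₂*t-β)^2 + 2*(σ₁*t-α)*(σ₂*t-β)*cθ := by
          rw [habs2 u v]
          have expand : (u^2*P^2 + 2*u*v*R + v^2*Q^2) * s^2
              = (u*(P*s))^2 + (v*(Q*s))^2 + 2*(u*(P*s))*(v*(Q*s))*cθ := by
            linear_combination (2*u*v*s^2) * hRc
          rw [expand, hU, hV]; ring
        have hbound : ‖(u:ℂ)*η₁ + (v:ℂ)*η₂‖^2 * (s^2 * (1+|cθ|)) ≤ 2*t^2 := by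
          calc ‖(u:ℂ)*η₁ + (v:ℂ)*η₂‖^2 * (s^2 * (1+|cθ|))
              = ((σ₁*t-α)^2 + (σ₂*t-β)^2 + 2*(σ₁*t-α)*(σ₂*t-β)*cθ) * (1+|cθ|) := by
                rw [← hid]; ring
            _ ≤ 2*t^2 := by linarith [hkey]
        have hsq : ‖(u:ℂ)*η₁ + (v:ℂ)*η₂‖^2 ≤ r^2 := by
          have hpos : (0:ℝ) < s^2 * (1+|cθ|) := by positivity
          have h3 : ‖(u:ℂ)*η₁ + (v:ℂ)*η₂‖^2 * (s^2*(1+|cθ|))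
              ≤ r^2 * (s^2*(1+|cθ|)) := by rw [hr2]; exact hbound
          exact le_of_mul_le_mul_right h3 hpos
        exact le_of_sq_le_sq' _ _ (norm_nonneg _) hr0 hsq
    · -- e₁ bad, e₂ good
      have habs1 : |if 0 ≤ e₁ then δ₁ else -δ₁| = δ₁ := by
        split <;> simp [abs_neg, abs_of_pos hδ₁0]
      refine ⟨if 0 ≤ e₁ then δ₁ else -δ₁, e₂, by rw [habs1],
        by rw [habs1]; exact hδ₁half, hg2, he₂, ?_⟩
      · have hsub : |e₁ - (if 0 ≤ e₁ then δ₁ else -δ₁)| ≤ δ₁ := by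
          rw [abs_lt] at hb1
          split <;> rename_i hsign
          · rw [abs_le]; constructor <;> linarith
          · rw [abs_le]; push_neg at hsign; constructor <;> linarith
        have : ‖((e₁ - (if 0 ≤ e₁ then δ₁ else -δ₁) : ℝ):ℂ)*η₁
            + ((e₂ - e₂ : ℝ):ℂ)*η₂‖ = |e₁ - (if 0 ≤ e₁ then δ₁ else -δ₁)| * P := by
          simp only [sub_self, Complex.ofReal_zero, zero_mul, add_zero, norm_mul,
            Complex.norm_real, Real.norm_eq_abs]
          rfl
        rw [this]
        calc |e₁ - (if 0 ≤ e₁ then δ₁ else -δ₁)| * P ≤ δ₁ * P :=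
              mul_le_mul_of_nonneg_right hsub hP.le
          _ ≤ r := by
              have h1 : (δ₁*P) * s ≤ r * s := by rw [mul_assoc, hδ₁Ps]; exact hts
              exact le_of_mul_le_mul_right h1 hs
    · -- e₁ good, e₂ bad
      have habs2' : |if 0 ≤ e₂ then δ₂ else -δ₂| = δ₂ := by
        split <;> simp [abs_neg, abs_of_pos hδ₂0]
      refine ⟨e₁, if 0 ≤ e₂ then δ₂ else -δ₂, hg1, he₁, by rw [habs2'],
        by rw [habs2']; exact hδ₂half, ?_⟩
      · have hsub : |e₂ - (if 0 ≤ e₂ then δ₂ else -δ₂)| ≤ δ₂ := by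
          rw [abs_lt] at hb2
          split <;> rename_i hsign
          · rw [abs_le]; constructor <;> linarith
          · rw [abs_le]; push_neg at hsign; constructor <;> linarith
        have : ‖((e₁ - e₁ : ℝ):ℂ)*η₁
            + ((e₂ - (if 0 ≤ e₂ then δ₂ else -δ₂) : ℝ):ℂ)*η₂‖
            = |e₂ - (if 0 ≤ e₂ then δ₂ else -δ₂)| * Q := by
          simp only [sub_self, Complex.ofReal_zero, zero_mul, zero_add, norm_mul,
            Complex.norm_real, Real.norm_eq_abs]
          rfl
        rw [this]
        calc |e₂ - (if 0 ≤ e₂ then δ₂ else -δ₂)| * Q ≤ δ₂ * Q :=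
              mul_le_mul_of_nonneg_right hsub hQ.le
          _ ≤ r := by
              have h1 : (δ₂*Q) * s ≤ r * s := by rw [mul_assoc, hδ₂Qs]; exact hts
              exact le_of_mul_le_mul_right h1 hs
    · -- both good
      refine ⟨e₁, e₂, hg1, he₁, hg2, he₂, ?_⟩
      simp only [sub_self, Complex.ofReal_zero, zero_mul, add_zero, norm_zero]
      exact hr0
  obtain ⟨m₁, x', hx'1, hx'2, hm₁⟩ := onedim eh₁ n₁ δ₁ hδ₁0 hδ₁half hehl1 hehu1
  obtain ⟨m₂, y', hy'1, hy'2, hm₂⟩ := onedim eh₂ n₂ δ₂ hδ₂0 hδ₂half hehl2 hehu2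
  set w₀ := ξ + (x':ℂ)*η₁ + (y':ℂ)*η₂ with hw₀def
  have hw₀mem : w₀ ∈ innerPart t (fund ξ η₁ η₂) :=
    mem_inner ξ η₁ η₂ hK t x' y' ht hx'1 hx'2 hy'1 hy'2
  set d := (m₁:ℂ)*η₁ + (m₂:ℂ)*η₂ with hddef
  have hdmem : d ∈ lat η₁ η₂ := ⟨m₁, m₂, rfl⟩
  have hdistz : dist z (w₀ + d) ≤ r := by
    have hzrep := co_repr ξ η₁ η₂ z hK
    have hre1 : pp - ((m₁:ℝ) + x') = e₁ - eh₁ := by rw [he₁def]; linarith [hm₁]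
    have hre2 : qq - ((m₂:ℝ) + y') = e₂ - eh₂ := by rw [he₂def]; linarith [hm₂]
    have key : z - (w₀ + d) = ((e₁ - eh₁ : ℝ):ℂ)*η₁ + ((e₂ - eh₂ : ℝ):ℂ)*η₂ := by
      have c1 : ((pp - ((m₁:ℝ) + x') : ℝ) : ℂ) = ((e₁ - eh₁ : ℝ) : ℂ) := by
        exact_mod_cast congrArg Complex.ofReal hre1
      have c2 : ((qq - ((m₂:ℝ) + y') : ℝ) : ℂ) = ((e₂ - eh₂ : ℝ) : ℂ) := by
        exact_mod_cast congrArg Complex.ofReal hre2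
      rw [hw₀def, hddef]
      push_cast at c1 c2 ⊢
      linear_combination hzrep + c1*η₁ + c2*η₂
    rw [Complex.dist_eq, key]
    exact hΔ
  obtain ⟨sp, hsp, hdsp⟩ := hS (w₀ + d) ⟨w₀, hw₀mem, d, hdmem, rfl⟩
  refine ⟨sp, hsp, ?_⟩
  calc dist z sp ≤ dist z (w₀+d) + dist (w₀+d) sp := dist_triangle _ _ _
    _ ≤ r + t := add_le_add hdistz hdsp
    _ = nu2 θ * t := by rw [hrdef]; ring
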